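/- Let A be a right-cancellative monoid, B ⊆ A a submonoid that is a group, and R a ring. Then the monoid algebra R[A] is a free module over R[B]. In particular the inclusion R[B] ⊆ R[A] is flat. -/

import Mathlib

/-!
Statement 0: Let `A` be a right-cancellative monoid, `B ⊆ A` a submonoid which is a
group, and `R` a (commutative) ring. Then the monoid algebra `R[A]` is a free module
over `R[B]` (in particular the inclusion `R[B] ⊆ R[A]` is flat, since free modules
are flat). The module structure on `R[A]` over `R[B]` is the one induced by the
ring homomorphism `R[B] → R[A]` coming from the inclusion `B ⊆ A`.
-/

/-- The orbit equivalence relation on `A` for the left action of `B`. -/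
private def orbitSetoid {A : Type*} [Monoid A] (B : Submonoid A)
    (hB : ∀ b : B, ∃ c : B, b * c = 1 ∧ c * b = 1) : Setoid A where
  r a a' := ∃ b : B, (b : A) * a' = a
  iseqv := by
    constructor
    · exact fun a => ⟨1, one_mul a⟩
    · rintro a a' ⟨b, rfl⟩
      obtain ⟨c, hbc, hcb⟩ := hB b
      refine ⟨c, ?_⟩
      rw [← mul_assoc, ← Submonoid.coe_mul, hcb, Submonoid.coe_one, one_mul]
    · rintro a a' a'' ⟨b, rfl⟩ ⟨c, rfl⟩
      exact ⟨b * c, by rw [Submonoid.coe_mul, mul_assoc]⟩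

private theorem mapDomain_mul_single {A : Type*} [Monoid A] (B : Submonoid A)
    (R : Type*) [CommRing R] (c : MonoidAlgebra R B) (x : A) :
    (MonoidAlgebra.mapDomainRingHom R B.subtype c) * MonoidAlgebra.single x (1 : R) =
      MonoidAlgebra.mapDomain (fun b : B => (b : A) * x) c := by
  induction c using MonoidAlgebra.induction with
  | zero => simp
  | single_add b r f _ _ ih =>
    rw [map_add, add_mul, ih, MonoidAlgebra.mapDomain_add]
    congr 1
    have h1 : (MonoidAlgebra.mapDomainRingHom R B.subtype) (MonoidAlgebra.single b r) =
        MonoidAlgebra.single ((b : A)) r := by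
      simp [MonoidAlgebra.mapDomainRingHom]
    rw [h1, MonoidAlgebra.single_mul_single, mul_one, MonoidAlgebra.mapDomain_single]

theorem monoidAlgebra_free_over_subgroup
    {A : Type*} [Monoid A]
    (hA : ∀ x y z : A, x * z = y * z → x = y)  -- A is right cancellative
    (B : Submonoid A)
    (hB : ∀ b : B, ∃ c : B, b * c = 1 ∧ c * b = 1)  -- B is a group
    (R : Type*) [CommRing R] :
    letI : Module (MonoidAlgebra R B) (MonoidAlgebra R A) :=
      Module.compHom (MonoidAlgebra R A) (MonoidAlgebra.mapDomainRingHom R B.subtype)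
    Module.Free (MonoidAlgebra R B) (MonoidAlgebra R A) := by
  letI : Module (MonoidAlgebra R B) (MonoidAlgebra R A) :=
    Module.compHom (MonoidAlgebra R A) (MonoidAlgebra.mapDomainRingHom R B.subtype)
  classical
  letI s : Setoid A := orbitSetoid B hB
  -- the candidate basis, indexed by the orbits
  set v : Quotient s → MonoidAlgebra R A :=
    fun q => MonoidAlgebra.single q.out (1 : R) with hv
  have hsmul : ∀ (x : MonoidAlgebra R B) (m : MonoidAlgebra R A),
      x • m = MonoidAlgebra.mapDomainRingHom R B.subtype x * m := fun _ _ => rfl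
  -- injectivity of (b, q) ↦ b * q.out
  have key : ∀ (b b' : B) (q q' : Quotient s),
      (b : A) * q.out = (b' : A) * q'.out → q = q' := by
    intro b b' q q' h
    obtain ⟨c, hbc, hcb⟩ := hB b'
    have h2 : ((c * b : B) : A) * q.out = q'.out := by
      rw [Submonoid.coe_mul, mul_assoc, h, ← mul_assoc, ← Submonoid.coe_mul, hcb,
        Submonoid.coe_one, one_mul]
    have hrel : s.r q'.out q.out := ⟨c * b, h2⟩
    calc q = ⟦q.out⟧ := (Quotient.out_eq q).symm
      _ = ⟦q'.out⟧ := (Quotient.sound (Setoid.symm hrel))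
      _ = q' := Quotient.out_eq q'
  have keyinj : ∀ (q : Quotient s), Function.Injective (fun b : B => (b : A) * q.out) := by
    intro q b b' h
    exact Subtype.coe_injective (hA _ _ _ h)
  -- the coefficient computation
  have coeff : ∀ (l : (Quotient s) →₀ MonoidAlgebra R B) (q : Quotient s) (b : B),
      (Finsupp.linearCombination (MonoidAlgebra R B) v l).coeff ((b : A) * q.out) = (l q).coeff b := by
    intro l q b
    rw [Finsupp.linearCombination_apply, Finsupp.sum, MonoidAlgebra.coeff_sum, Finsupp.finset_sum_apply]
    have hterm : ∀ q' : Quotient s,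
        (l q' • v q').coeff ((b : A) * q.out) = if q' = q then (l q).coeff b else 0 := by
      intro q'
      rw [hsmul, hv, mapDomain_mul_single, MonoidAlgebra.coeff_mapDomain]
      split_ifs with hq
      · subst hq
        exact Finsupp.mapDomain_apply (keyinj q') (l q').coeff b
      · refine Finsupp.mapDomain_notin_range _ _ ?_
        rintro ⟨b', hb'⟩
        exact hq (key b' b q' q hb')
    rw [Finset.sum_congr rfl fun q' _ => hterm q']
    by_cases hq : q ∈ l.support
    · rw [Finset.sum_ite_eq' l.support q fun _ => (l q).coeff b, if_pos hq]
    · rw [Finset.sum_ite_eq' l.support q fun _ => (l q).coeff b, if_neg hq]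
      have : l q = 0 := Finsupp.notMem_support_iff.mp hq
      rw [this]; rfl
  -- linear independence
  have hli : LinearIndependent (MonoidAlgebra R B) v := by
    rw [linearIndependent_iff]
    intro l hl
    ext q b
    have := coeff l q b
    rw [hl] at this
    simpa using this.symm
  -- spanning
  have hspan : ⊤ ≤ Submodule.span (MonoidAlgebra R B) (Set.range v) := by
    intro f _
    induction f using MonoidAlgebra.induction with
    | zero => exact Submodule.zero_mem _
    | single_add a r f _ _ ih =>
      refine Submodule.add_mem _ ?_ (ih trivial)
      -- `single a r` is a multiple of a basis vector
      obtain ⟨b₀, hb₀⟩ : s.r a (Quotient.out ⟦a⟧) := by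
        have := Quotient.mk_out (s := s) a
        exact Setoid.symm this
      have : (MonoidAlgebra.single b₀ r : MonoidAlgebra R B) • v ⟦a⟧ =
          MonoidAlgebra.single a r := by
        rw [hsmul, hv, mapDomain_mul_single, MonoidAlgebra.mapDomain_single, hb₀]
      show MonoidAlgebra.single a r ∈ _
      rw [← this]
      exact Submodule.smul_mem _ _ (Submodule.subset_span ⟨⟦a⟧, rfl⟩)
  exact Module.Free.of_basis (Module.Basis.mk hli hspan)
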